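/- arXiv:2502.03345 — 2 statements merged into one kernel-verified Lean document; each statement's English description precedes it below -/
import Mathlib

section
/- Let n be even and m prime with m ≡ -1 mod n. Then D^m(e) = H^{-1}(D(e)) in (Z/mZ)^n, where e = (0,...,0,1); explicitly, D^m(0,...,0,1) = (1,0,...,0,1). -/
/-- The Ducci map on `(ZMod m)^n`. -/
def D (m n : ℕ) [NeZero n] (u : Fin n → ZMod m) : Fin n → ZMod m :=
  fun i => u i + u (i + 1)

/-- The inverse cyclic shift (right shift), i.e. `H⁻¹`. -/
def Hinv (m n : ℕ) [NeZero n] (u : Fin n → ZMod m) : Fin n → ZMod m :=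
  fun i => u (i - 1)

/-- The tuple `(0, 0, ..., 0, 1)`. -/
def e (m n : ℕ) [NeZero n] : Fin n → ZMod m :=
  fun i => if i.val = n - 1 then 1 else 0

open Fin.NatCast Fin.CommRing

namespace DucciAux

/-- The left shift as a linear endomorphism. -/
def S (m n : ℕ) [NeZero n] : Module.End (ZMod m) (Fin n → ZMod m) where
  toFun u := fun i => u (i + 1)
  map_add' _ _ := rfl
  map_smul' _ _ := rfl

lemma S_pow_apply (m n : ℕ) [NeZero n] (k : ℕ) (u : Fin n → ZMod m) (i : Fin n) :
    ((S m n) ^ k) u i = u (i + (k : Fin n)) := by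
  induction k generalizing u with
  | zero => simp
  | succ k ih =>
    rw [pow_succ, Module.End.mul_apply, ih]
    show u (i + (k : Fin n) + 1) = _
    congr 1
    push_cast
    ring

lemma D_eq (m n : ℕ) [NeZero n] (u : Fin n → ZMod m) :
    D m n u = (1 + S m n) u := rfl

lemma iterate_D (m n : ℕ) [NeZero n] (k : ℕ) (u : Fin n → ZMod m) :
    (D m n)^[k] u = ((1 + S m n) ^ k) u := by
  induction k with
  | zero => simp
  | succ k ih =>
    rw [Function.iterate_succ_apply', ih, D_eq, pow_succ', Module.End.mul_apply]

end DucciAux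

theorem duci_even (n m : ℕ) [NeZero n] (hn : Even n) (hm : m.Prime) (hmod : m % n = n - 1) :
    (D m n)^[m] (e m n) = Hinv m n (D m n (e m n)) ∧
    (D m n)^[m] (e m n) = fun i => if i.val = 0 ∨ i.val = n - 1 then 1 else 0 := by
  have hn1 : 1 ≤ n := Nat.one_le_iff_ne_zero.mpr (NeZero.ne n)
  have hn2 : 2 ≤ n := by
    rcases hn with ⟨r, hr⟩
    omega
  haveI : Fact m.Prime := ⟨hm⟩
  haveI : Nontrivial (Fin n → ZMod m) := by
    haveI : Nontrivial (ZMod m) := ZMod.nontrivial_iff.mpr hm.one_lt.ne'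
    exact Pi.nontrivial
  haveI hchar : CharP (Module.End (ZMod m) (Fin n → ZMod m)) m := by
    have hinj : Function.Injective (algebraMap (ZMod m) (Module.End (ZMod m) (Fin n → ZMod m))) := by
      intro a b hab
      have := congrFun (congrArg (fun f => f (fun _ => (1 : ZMod m))) hab) ⟨0, Nat.pos_of_ne_zero (NeZero.ne n)⟩
      simpa [Module.algebraMap_end_apply] using this
    exact charP_of_injective_algebraMap hinj m
  -- freshman's dream
  have key : (1 + DucciAux.S m n) ^ m = 1 + (DucciAux.S m n) ^ m := by
    have h := add_pow_char_of_commute (p := m) (Commute.one_left (DucciAux.S m n))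
    simpa using h
  -- m ≡ -1 in Fin n
  have hm_cast : (m : Fin n) = -1 := by
    have hdm : m = n * (m / n) + (n - 1) := by
      conv_lhs => rw [← Nat.div_add_mod m n]
      rw [hmod]
    have h1 : ((n - 1 : ℕ) : Fin n) = -1 := by
      have : ((n - 1 : ℕ) : Fin n) + 1 = 0 := by
        have : ((n - 1 : ℕ) : Fin n) + ((1 : ℕ) : Fin n) = ((n - 1 + 1 : ℕ) : Fin n) := by
          push_cast; ring
        rw [Nat.cast_one] at this
        rw [this, Nat.sub_add_cancel hn1, Fin.natCast_self]
      linear_combination this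
    calc (m : Fin n) = ((n * (m / n) + (n - 1) : ℕ) : Fin n) := by rw [← hdm]
      _ = (n : Fin n) * (m / n : ℕ) + ((n - 1 : ℕ) : Fin n) := by push_cast; ring
      _ = -1 := by rw [Fin.natCast_self, h1]; ring
  -- the explicit value of D^[m] e
  have hval : ∀ i : Fin n, (D m n)^[m] (e m n) i = e m n i + e m n (i - 1) := by
    intro i
    rw [DucciAux.iterate_D, key]
    show e m n i + (DucciAux.S m n ^ m) (e m n) i = _
    rw [DucciAux.S_pow_apply, hm_cast, sub_eq_add_neg]
  have hsub : ∀ i : Fin n, (i - 1 : Fin n).val = n - 1 ↔ i.val = 0 := by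
    intro i
    constructor
    · intro h
      have hval1 : (-1 : Fin n).val = n - 1 := by
        have : (-1 : Fin n) = ((n - 1 : ℕ) : Fin n) := by
          have h1 : ((n - 1 : ℕ) : Fin n) + 1 = 0 := by
            have h2 : ((n - 1 : ℕ) : Fin n) + ((1 : ℕ) : Fin n) = ((n - 1 + 1 : ℕ) : Fin n) := by
              push_cast; ring
            rw [Nat.cast_one] at h2
            rw [h2, Nat.sub_add_cancel hn1, Fin.natCast_self]
          linear_combination -h1
        rw [this, Fin.val_natCast, Nat.mod_eq_of_lt (by omega)]
      have : i - 1 = -1 := by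
        apply Fin.ext
        rw [h, hval1]
      have : i = 0 := by linear_combination this
      rw [this]; rfl
    · intro h
      have : i = 0 := Fin.ext (by simpa using h)
      subst this
      have : (0 - 1 : Fin n) = -1 := by ring
      rw [this]
      have h1 : ((n - 1 : ℕ) : Fin n) + 1 = 0 := by
        have h2 : ((n - 1 : ℕ) : Fin n) + ((1 : ℕ) : Fin n) = ((n - 1 + 1 : ℕ) : Fin n) := by
          push_cast; ring
        rw [Nat.cast_one] at h2
        rw [h2, Nat.sub_add_cancel hn1, Fin.natCast_self]
      have : (-1 : Fin n) = ((n - 1 : ℕ) : Fin n) := by linear_combination -h1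
      rw [this, Fin.val_natCast, Nat.mod_eq_of_lt (by omega)]
  have second : (D m n)^[m] (e m n) =
      fun i => if i.val = 0 ∨ i.val = n - 1 then (1 : ZMod m) else 0 := by
    funext i
    rw [hval i]
    unfold e
    by_cases h0 : i.val = 0
    · have hne : i.val ≠ n - 1 := by omega
      rw [if_neg hne, if_pos ((hsub i).mpr h0), if_pos (Or.inl h0), zero_add]
    · by_cases h1 : i.val = n - 1
      · have : (i - 1 : Fin n).val ≠ n - 1 := fun h => h0 ((hsub i).mp h)
        rw [if_pos h1, if_neg this, if_pos (Or.inr h1), add_zero]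
      · have : (i - 1 : Fin n).val ≠ n - 1 := fun h => h0 ((hsub i).mp h)
        rw [if_neg h1, if_neg this, if_neg (by tauto), add_zero]
  refine ⟨?_, second⟩
  funext i
  rw [hval i]
  show e m n i + e m n (i - 1) = e m n (i - 1) + e m n (i - 1 + 1)
  rw [sub_add_cancel, add_comm]
end

section
/- Suppose there exist L ≥ 0, α > 0 and β with D^{L+α}(e) = H^β(D^L(e)) where e = (0,...,0,1) ∈ (Z/mZ)^n. Then for every u ∈ (Z/mZ)^n, D^{L+α}(u) = H^β(D^L(u)). -/
/-- The cyclic left shift on `(ZMod m)^n`. -/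
def H (m n : ℕ) [NeZero n] (u : Fin n → ZMod m) : Fin n → ZMod m :=
  fun i => u (i + 1)

/-- `D` as a linear map. -/
def Dl (m n : ℕ) [NeZero n] : Module.End (ZMod m) (Fin n → ZMod m) where
  toFun := D m n
  map_add' u v := by funext i; simp [D]; ring
  map_smul' c u := by funext i; simp [D, mul_add]

/-- `H` as a linear map. -/
def Hl (m n : ℕ) [NeZero n] : Module.End (ZMod m) (Fin n → ZMod m) where
  toFun := H m n
  map_add' u v := by funext i; simp [H]
  map_smul' c u := by funext i; simp [H]

open Fin.NatCast Fin.CommRing in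
lemma Hiter (m n : ℕ) [NeZero n] (k : ℕ) (u : Fin n → ZMod m) (i : Fin n) :
    (H m n)^[k] u i = u (i + (k : Fin n)) := by
  induction k generalizing i with
  | zero => simp
  | succ k ih =>
    rw [Function.iterate_succ_apply', H, ih]
    congr 1
    push_cast
    ring

lemma DHcomm (m n : ℕ) [NeZero n] : Commute (Dl m n) (Hl m n) := by
  ext u i
  simp [Dl, Hl, D, H]

theorem basic_determines_all (m n : ℕ) [NeZero n] (L α β : ℕ) (hα : 0 < α)
    (h : (D m n)^[L + α] (e m n) = (H m n)^[β] ((D m n)^[L] (e m n))) :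
    ∀ u : Fin n → ZMod m, (D m n)^[L + α] u = (H m n)^[β] ((D m n)^[L] u) := by
  intro u
  have hn : 0 < n := Nat.pos_of_ne_zero (NeZero.ne n)
  set F : Module.End (ZMod m) (Fin n → ZMod m) :=
    (Dl m n) ^ (L + α) - (Hl m n) ^ β * (Dl m n) ^ L with hF
  have hDcoe : ∀ k (v : Fin n → ZMod m), ((Dl m n) ^ k) v = (D m n)^[k] v := by
    intro k v
    rw [Module.End.pow_apply]; rfl
  have hHcoe : ∀ k (v : Fin n → ZMod m), ((Hl m n) ^ k) v = (H m n)^[k] v := by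
    intro k v
    rw [Module.End.pow_apply]; rfl
  have hFe : F (e m n) = 0 := by
    simp only [hF, LinearMap.sub_apply, Module.End.mul_apply, hDcoe, hHcoe, h, sub_self]
  have hcomm : ∀ k : ℕ, F * (Hl m n) ^ k = (Hl m n) ^ k * F := by
    intro k
    have h1 : Commute F (Hl m n) :=
      Commute.sub_left ((DHcomm m n).pow_left _)
        (Commute.mul_left ((Commute.refl (Hl m n)).pow_left β) ((DHcomm m n).pow_left L))
    exact (h1.pow_right k).eq
  have hsingle : ∀ j : Fin n, (Pi.single j (1 : ZMod m) : Fin n → ZMod m)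
      = (H m n)^[n - 1 - j.val] (e m n) := by
    intro j
    funext i
    rw [Hiter, e]
    have hi := i.isLt
    have hj := j.isLt
    have hk : (n - 1 - j.val) % n = n - 1 - j.val :=
      Nat.mod_eq_of_lt (by omega)
    open Fin.NatCast in
    have hval : (i + ((n - 1 - j.val : ℕ) : Fin n)).val
        = (i.val + (n - 1 - j.val)) % n := by
      rw [Fin.add_def, Fin.val_natCast, hk]
    have hcond : ((i.val + (n - 1 - j.val)) % n = n - 1) ↔ i = j := by
      rw [Fin.ext_iff]
      rcases Nat.lt_or_ge (i.val + (n - 1 - j.val)) n with hlt | hge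
      · rw [Nat.mod_eq_of_lt hlt]; omega
      · have h2 : (i.val + (n - 1 - j.val)) % n = i.val + (n - 1 - j.val) - n := by
          rw [Nat.mod_eq_sub_mod hge, Nat.mod_eq_of_lt (by omega)]
        rw [h2]; omega
    rw [hval, Pi.single_apply]
    simp only [← hcond]
  have key : ∀ v : Fin n → ZMod m, F v = 0 := by
    intro v
    have hv : v = ∑ j : Fin n, Pi.single j (v j) := (Finset.univ_sum_single v).symm
    rw [hv, map_sum]
    apply Finset.sum_eq_zero
    intro j _
    have h1 : (Pi.single j (v j) : Fin n → ZMod m)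
        = v j • (Pi.single j (1 : ZMod m) : Fin n → ZMod m) := by
      funext i
      simp [Pi.single_apply, mul_ite]
    rw [h1, map_smul, hsingle j, ← hHcoe]
    have h2 := congrArg (fun (G : Module.End (ZMod m) (Fin n → ZMod m)) => G (e m n))
      (hcomm (n - 1 - j.val))
    simp only [Module.End.mul_apply] at h2
    rw [h2, hFe, map_zero, smul_zero]
  have hu := key u
  simp only [hF, LinearMap.sub_apply, Module.End.mul_apply, hDcoe, hHcoe] at hu
  rw [sub_eq_zero] at hu
  exact hu
end
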